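/- Let k ≥ 3 be an integer, and suppose 0 ≤ a < 1/k and (k-1)/k < b ≤ 1. If x ∈ (0,1) is of the form x = ℓ/k^m for natural numbers ℓ, m, then g_k(x) ∉ W_2(g_k(a), g_k(b)); that is, there exists n ≥ 0 with T_2^n(g_k(x)) ∈ (g_k(a), g_k(b)). -/

import Mathlib

open scoped ENNReal

/-- The `k`-transformation `x ↦ k·x mod 1`. -/
noncomputable def Tmap (k : ℕ) (x : ℝ) : ℝ := Int.fract ((k : ℝ) * x)

/-- The survivor set of the `k`-transformation with hole `(a,b)`. -/
def W (k : ℕ) (a b : ℝ) : Set ℝ :=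
  {x | x ∈ Set.Ico (0 : ℝ) 1 ∧ ∀ n : ℕ, (Tmap k)^[n] x ∉ Set.Ioo a b}

/-- The generalized Cantor set `C_k`. -/
def Ck (k : ℕ) : Set ℝ :=
  {x | ∃ a : ℕ → ℕ, (∀ n, a n = 0 ∨ a n = k - 1) ∧
    x = ∑' n : ℕ, (a n : ℝ) / (k : ℝ) ^ (n + 1)}

/-- The `n`-th `k`-ary digit of `x`. -/
noncomputable def digit (k : ℕ) (n : ℕ) (x : ℝ) : ℤ :=
  ⌊(k : ℝ) ^ (n + 1) * x⌋ % (k : ℤ)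

open Classical in
/-- The generalized Cantor function `g_k`. -/
noncomputable def gk (k : ℕ) (x : ℝ) : ℝ :=
  if x = 1 then 1
  else if ∀ n, digit k n x = 0 ∨ digit k n x = (k : ℤ) - 1 then
    ∑' n : ℕ, (digit k n x : ℝ) / (((k : ℝ) - 1) * 2 ^ (n + 1))
  else
    (∑ n ∈ Finset.range (sInf {n : ℕ | ¬(digit k n x = 0 ∨ digit k n x = (k : ℤ) - 1)}),
      (digit k n x : ℝ) / (((k : ℝ) - 1) * 2 ^ (n + 1))) +
    1 / 2 ^ (sInf {n : ℕ | ¬(digit k n x = 0 ∨ digit k n x = (k : ℤ) - 1)} + 1)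

/-- The Thue–Morse sequence: parity of the number of 1s in the binary expansion. -/
def tm (n : ℕ) : ℕ := (Nat.digits 2 n).sum % 2


section Aux
variable {k : ℕ}

lemma digit_nonneg (hk : 0 < k) (n : ℕ) (x : ℝ) : 0 ≤ digit k n x :=
  Int.emod_nonneg _ (by exact_mod_cast hk.ne')

lemma digit_lt (hk : 0 < k) (n : ℕ) (x : ℝ) : digit k n x < k :=
  Int.emod_lt_of_pos _ (by exact_mod_cast hk)

lemma digit_rec (hk : 0 < k) (n : ℕ) (x : ℝ) :
    digit k n x = ⌊(k:ℝ)^(n+1) * x⌋ - k * ⌊(k:ℝ)^n * x⌋ := by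
  have hk' : (0:ℝ) < k := by exact_mod_cast hk
  set y := (k:ℝ)^n * x with hy
  have hky : (k:ℝ)^(n+1) * x = k * y := by rw [hy]; ring
  have hfl : ⌊(k:ℝ) * y⌋ - (k:ℤ) * ⌊y⌋ = ⌊(k:ℝ) * Int.fract y⌋ := by
    rw [Int.fract]
    have : (k:ℝ) * (y - ⌊y⌋) = k * y - ((k * ⌊y⌋ : ℤ) : ℝ) := by push_cast; ring
    rw [this, Int.floor_sub_intCast]
  have h0 : 0 ≤ ⌊(k:ℝ) * Int.fract y⌋ :=
    Int.floor_nonneg.mpr (mul_nonneg hk'.le (Int.fract_nonneg y))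
  have h1 : ⌊(k:ℝ) * Int.fract y⌋ < k := by
    rw [Int.floor_lt]
    calc (k:ℝ) * Int.fract y < k * 1 := by
          exact mul_lt_mul_of_pos_left (Int.fract_lt_one y) hk'
      _ = ((k:ℤ):ℝ) := by push_cast; ring
  have key : ⌊(k:ℝ)^(n+1) * x⌋ = ⌊(k:ℝ) * Int.fract y⌋ + (k:ℤ) * ⌊y⌋ := by
    rw [hky]; omega
  rw [digit, key, Int.add_mul_emod_self_left, Int.emod_eq_of_lt h0 h1]
  omega

lemma floor_key (hk : 0 < k) (x : ℝ) (M : ℕ) :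
    ⌊(k:ℝ)^M * x⌋ = (∑ n ∈ Finset.range M, digit k n x * (k:ℤ)^(M-1-n)) + (k:ℤ)^M * ⌊x⌋ := by
  induction M with
  | zero => simp
  | succ M ih =>
      have hd := digit_rec hk M x
      have hstep : ⌊(k:ℝ)^(M+1) * x⌋ = (k:ℤ) * ⌊(k:ℝ)^M * x⌋ + digit k M x := by omega
      rw [hstep, ih, Finset.sum_range_succ]
      have : ∀ n ∈ Finset.range M,
          digit k n x * (k:ℤ)^(M+1-1-n) = (k:ℤ) * (digit k n x * (k:ℤ)^(M-1-n)) := by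
        intro n hn
        have hn' : n < M := Finset.mem_range.mp hn
        have : M+1-1-n = (M-1-n)+1 := by omega
        rw [this, pow_succ]; ring
      rw [Finset.sum_congr rfl this, ← Finset.mul_sum]
      have : M + 1 - 1 - M = 0 := by omega
      rw [this, pow_succ]
      ring

lemma digit_terminating (hk : 0 < k) (l m n : ℕ) (hn : m ≤ n) :
    digit k n ((l:ℝ)/(k:ℝ)^m) = 0 := by
  have hk' : (0:ℝ) < (k:ℝ)^m := by positivity
  have hsplit : (k:ℝ)^(n+1) = (k:ℝ)^m * (k:ℝ)^(n+1-m) := by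
    rw [← pow_add]; congr 1; omega
  have hval : (k:ℝ)^(n+1) * ((l:ℝ)/(k:ℝ)^m) = ((l * k^(n+1-m) : ℕ) : ℝ) := by
    rw [hsplit]; push_cast; field_simp
  have : digit k n ((l:ℝ)/(k:ℝ)^m) = ((l * k^(n+1-m) : ℕ) : ℤ) % k := by
    rw [digit, hval, Int.floor_natCast]
  rw [this]
  have hdvd : (k:ℤ) ∣ ((l * k^(n+1-m) : ℕ) : ℤ) := by
    push_cast
    exact Dvd.dvd.mul_left (dvd_pow_self (k:ℤ) (by omega)) _
  exact Int.emod_eq_zero_of_dvd hdvd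

lemma sum_two_pow (N : ℕ) : ∑ i ∈ Finset.range N, 2^i = 2^N - 1 := by
  induction N with
  | zero => simp
  | succ N ih =>
      rw [Finset.sum_range_succ, ih]
      have : 1 ≤ 2^N := Nat.one_le_two_pow
      omega

lemma floor_zero_of_Ico {y : ℝ} (h0 : 0 ≤ y) (h1 : y < 1) : ⌊y⌋ = 0 :=
  Int.floor_eq_zero_iff.mpr ⟨h0, h1⟩

lemma exists_pos_digit (hk : 0 < k) {x : ℝ} (hx0 : 0 < x) (hx1 : x < 1)
    (l m : ℕ) (hxe : x = (l : ℝ) / (k : ℝ) ^ m) :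
    ∃ n < m, digit k n x ≠ 0 := by
  by_contra hcon
  push_neg at hcon
  have hkm : (0:ℝ) < (k:ℝ)^m := by positivity
  have hfx : ⌊x⌋ = 0 := floor_zero_of_Ico hx0.le hx1
  have hval : (k:ℝ)^m * x = (l:ℝ) := by rw [hxe]; field_simp
  have hfl : ⌊(k:ℝ)^m * x⌋ = (l:ℤ) := by rw [hval, Int.floor_natCast]
  have hkey := floor_key hk x m
  rw [hfl, hfx] at hkey
  have hsum0 : ∑ n ∈ Finset.range m, digit k n x * (k:ℤ)^(m-1-n) = 0 := by
    apply Finset.sum_eq_zero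
    intro n hn
    rw [hcon n (Finset.mem_range.mp hn)]; ring
  rw [hsum0] at hkey
  have : l = 0 := by omega
  rw [this] at hval
  simp only [Nat.cast_zero] at hval
  nlinarith

lemma digit_zero_a (hk : 3 ≤ k) {a : ℝ} (ha : 0 ≤ a) (ha' : a < 1/(k:ℝ)) :
    digit k 0 a = 0 := by
  have hk' : (0:ℝ) < k := by positivity
  have h1 : (k:ℝ)^(0+1) * a < 1 := by
    rw [pow_one]
    calc (k:ℝ) * a < k * (1/k) := mul_lt_mul_of_pos_left ha' hk'
      _ = 1 := by field_simp
  have h0 : 0 ≤ (k:ℝ)^(0+1) * a := by positivity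
  rw [digit, floor_zero_of_Ico h0 h1]
  simp

lemma digit_zero_b (hk : 3 ≤ k) {b : ℝ} (hb' : ((k:ℝ)-1)/k < b) (hb1 : b < 1) :
    digit k 0 b = (k:ℤ) - 1 := by
  have hk' : (0:ℝ) < k := by positivity
  have hfl : ⌊(k:ℝ)^(0+1) * b⌋ = (k:ℤ) - 1 := by
    apply Int.floor_eq_iff.mpr
    constructor
    · push_cast
      rw [pow_one]
      calc (k:ℝ) - 1 = k * (((k:ℝ)-1)/k) := by field_simp
        _ ≤ k * b := by nlinarith
    · push_cast
      rw [pow_one]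
      nlinarith
  rw [digit, hfl, Int.emod_eq_of_lt (by omega) (by omega)]

lemma not_all_km1 (hk : 3 ≤ k) {a : ℝ} (ha : 0 ≤ a) (ha' : a < 1/(k:ℝ)) :
    ¬ ∀ n, 1 ≤ n → digit k n a = (k:ℤ) - 1 := by
  intro hall
  have hk0 : 0 < k := by omega
  have hk' : (1:ℝ) < k := by exact_mod_cast (by omega : 1 < k)
  have hkpos : (0:ℝ) < k := by linarith
  have hfa : ⌊a⌋ = 0 := floor_zero_of_Ico ha (lt_trans ha' (by
    rw [div_lt_one hkpos]; exact hk'))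
  have heps : (0:ℝ) < 1/(k:ℝ) - a := by linarith
  obtain ⟨M0, hM0⟩ := pow_unbounded_of_one_lt (1 / (1/(k:ℝ) - a)) hk'
  set M := M0 + 1 with hM
  have hMge : (1 / (1/(k:ℝ) - a)) < (k:ℝ)^M := by
    calc (1 / (1/(k:ℝ) - a)) < (k:ℝ)^M0 := hM0
      _ ≤ (k:ℝ)^M := pow_le_pow_right₀ (le_of_lt hk') (by omega)
  have hprod : 1 < (k:ℝ)^M * (1/(k:ℝ) - a) := (div_lt_iff₀ heps).mp hMge
  -- real upper bound on k^M * a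
  have hpowsplit : (k:ℝ)^M * (1/(k:ℝ)) = (k:ℝ)^(M-1) := by
    have : (k:ℝ)^M = (k:ℝ)^(M-1) * k := by
      conv_lhs => rw [show M = (M-1)+1 by omega]
      rw [pow_succ]
    rw [this]; field_simp
  have hub : (k:ℝ)^M * a < (k:ℝ)^(M-1) - 1 := by
    have : (k:ℝ)^M * (1/(k:ℝ)) - (k:ℝ)^M * a > 1 := by
      have := hprod; nlinarith [pow_pos hkpos M]
    rw [hpowsplit] at this; linarith
  -- integer lower bound on the floor
  have hkey := floor_key hk0 a M
  rw [hfa, mul_zero, add_zero] at hkey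
  have hlow : ((k:ℤ)^(M-1) - 1) ≤ ∑ n ∈ Finset.range M, digit k n a * (k:ℤ)^(M-1-n) := by
    have hsub : ∑ n ∈ Finset.Ico 1 M, ((k:ℤ)-1) * (k:ℤ)^(M-1-n)
        ≤ ∑ n ∈ Finset.range M, digit k n a * (k:ℤ)^(M-1-n) := by
      have h1 : ∑ n ∈ Finset.Ico 1 M, ((k:ℤ)-1) * (k:ℤ)^(M-1-n)
          = ∑ n ∈ Finset.Ico 1 M, digit k n a * (k:ℤ)^(M-1-n) := by
        apply Finset.sum_congr rfl
        intro n hn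
        rw [hall n (Finset.mem_Ico.mp hn).1]
      rw [h1]
      apply Finset.sum_le_sum_of_subset_of_nonneg
      · intro n hn
        simp only [Finset.mem_Ico, Finset.mem_range] at *
        omega
      · intro n hn _
        exact mul_nonneg (digit_nonneg hk0 n a) (by positivity)
    refine le_trans ?_ hsub
    rw [Finset.sum_Ico_eq_sum_range]
    have hre : ∀ i ∈ Finset.range (M-1), ((k:ℤ)-1) * (k:ℤ)^(M-1-(1+i))
        = (fun j => ((k:ℤ)-1) * (k:ℤ)^j) ((M-1) - 1 - i) := by
      intro i hi
      simp only []
      congr 2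
      omega
    rw [Finset.sum_congr rfl hre, Finset.sum_range_reflect (fun j => ((k:ℤ)-1) * (k:ℤ)^j) (M-1)]
    have heq : ∑ j ∈ Finset.range (M-1), ((k:ℤ)-1) * (k:ℤ)^j = (k:ℤ)^(M-1) - 1 := by
      rw [← Finset.mul_sum, mul_comm, geom_sum_mul]
    rw [heq]
  rw [← hkey] at hlow
  have : ((k:ℤ)^(M-1) - 1 : ℤ) ≤ (k:ℝ)^M * a := le_trans (by exact_mod_cast hlow) (Int.floor_le _)
  push_cast at this
  linarith

lemma not_all_zero (hk : 3 ≤ k) {b : ℝ} (hb' : ((k:ℝ)-1)/k < b) (hb1 : b < 1) :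
    ¬ ∀ n, 1 ≤ n → digit k n b = 0 := by
  intro hall
  have hk0 : 0 < k := by omega
  have hk' : (1:ℝ) < k := by exact_mod_cast (by omega : 1 < k)
  have hkpos : (0:ℝ) < k := by linarith
  have hb0 : 0 < b := lt_of_le_of_lt (div_nonneg (by linarith) (by linarith)) hb'
  have hfb : ⌊b⌋ = 0 := floor_zero_of_Ico hb0.le hb1
  have heps : (0:ℝ) < b - ((k:ℝ)-1)/k := by linarith
  obtain ⟨M0, hM0⟩ := pow_unbounded_of_one_lt (1 / (b - ((k:ℝ)-1)/k)) hk'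
  set M := M0 + 1 with hM
  have hMge : (1 / (b - ((k:ℝ)-1)/k)) < (k:ℝ)^M := by
    calc (1 / (b - ((k:ℝ)-1)/k)) < (k:ℝ)^M0 := hM0
      _ ≤ (k:ℝ)^M := pow_le_pow_right₀ (le_of_lt hk') (by omega)
  have hprod : 1 < (k:ℝ)^M * (b - ((k:ℝ)-1)/k) := (div_lt_iff₀ heps).mp hMge
  have hpowsplit : (k:ℝ)^M * (((k:ℝ)-1)/k) = ((k:ℝ)-1) * (k:ℝ)^(M-1) := by
    have : (k:ℝ)^M = (k:ℝ)^(M-1) * k := by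
      conv_lhs => rw [show M = (M-1)+1 by omega]
      rw [pow_succ]
    rw [this]; field_simp
  have hlb : ((k:ℝ)-1) * (k:ℝ)^(M-1) + 1 ≤ (k:ℝ)^M * b := by nlinarith
  have hkey := floor_key hk0 b M
  rw [hfb, mul_zero, add_zero] at hkey
  have hsum : ∑ n ∈ Finset.range M, digit k n b * (k:ℤ)^(M-1-n)
      = digit k 0 b * (k:ℤ)^(M-1) := by
    rw [Finset.sum_eq_single_of_mem 0 (Finset.mem_range.mpr (by omega))]
    · simp
    · intro n hn hne
      rw [hall n (by omega)]; ring
  rw [hsum] at hkey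
  have hd0 : digit k 0 b ≤ (k:ℤ) - 1 := by
    have := digit_lt hk0 0 b; omega
  have hup : ⌊(k:ℝ)^M * b⌋ ≤ ((k:ℤ)-1) * (k:ℤ)^(M-1) := by
    rw [hkey]
    exact mul_le_mul_of_nonneg_right hd0 (pow_nonneg (by positivity) _)
  have hlow : (((k:ℤ)-1) * (k:ℤ)^(M-1) + 1 : ℤ) ≤ ⌊(k:ℝ)^M * b⌋ := by
    apply Int.le_floor.mpr
    push_cast
    exact hlb
  omega

lemma denom_pos (hk : 3 ≤ k) (n : ℕ) : (0:ℝ) < ((k:ℝ)-1) * 2^(n+1) := by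
  have hkr : (3:ℝ) ≤ k := by exact_mod_cast hk
  have : (0:ℝ) < (k:ℝ)-1 := by linarith
  positivity

lemma term_nonneg (hk : 3 ≤ k) (x : ℝ) (n : ℕ) :
    0 ≤ (digit k n x : ℝ) / (((k:ℝ)-1) * 2^(n+1)) := by
  have h1 : (0:ℝ) ≤ (digit k n x : ℝ) := by exact_mod_cast digit_nonneg (by omega) n x
  exact div_nonneg h1 (denom_pos hk n).le

lemma term_le (hk : 3 ≤ k) (x : ℝ) (n : ℕ) :
    (digit k n x : ℝ) / (((k:ℝ)-1) * 2^(n+1)) ≤ (1/2)^(n+1) := by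
  have hkr : (3:ℝ) ≤ k := by exact_mod_cast hk
  have hd : (digit k n x : ℝ) ≤ (k:ℝ) - 1 := by
    have h := digit_lt (k := k) (by omega) n x
    have : (digit k n x : ℝ) ≤ ((k:ℤ):ℝ) - 1 := by exact_mod_cast (by omega : digit k n x ≤ (k:ℤ)-1)
    push_cast at this; linarith
  have h2 : ((k:ℝ)-1) / (((k:ℝ)-1) * 2^(n+1)) = (1/2)^(n+1) := by
    rw [div_pow, one_pow]
    rw [mul_comm, ← div_div, div_right_comm, div_self (by linarith : (k:ℝ)-1 ≠ 0)]
  calc (digit k n x : ℝ) / (((k:ℝ)-1) * 2^(n+1))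
      ≤ ((k:ℝ)-1) / (((k:ℝ)-1) * 2^(n+1)) :=
        (div_le_div_iff_of_pos_right (denom_pos hk n)).mpr hd
    _ = (1/2)^(n+1) := h2

lemma summable_half : Summable (fun n : ℕ => ((1:ℝ)/2)^(n+1)) := by
  simpa [pow_succ] using summable_geometric_two.mul_right (1/2 : ℝ)

lemma summable_term (hk : 3 ≤ k) (x : ℝ) :
    Summable (fun n : ℕ => (digit k n x : ℝ) / (((k:ℝ)-1) * 2^(n+1))) :=
  Summable.of_nonneg_of_le (term_nonneg hk x) (term_le hk x) summable_half

noncomputable def hfun : ℕ → ℝ := fun n => if n = 0 then 0 else (1/2)^(n+1)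

lemma hfun_nonneg (n : ℕ) : 0 ≤ hfun n := by
  rw [hfun]; split <;> positivity

lemma hfun_le (n : ℕ) : hfun n ≤ (1/2)^(n+1) := by
  rw [hfun]; split
  · positivity
  · exact le_refl _

lemma summable_hfun : Summable hfun :=
  Summable.of_nonneg_of_le hfun_nonneg hfun_le summable_half

lemma tsum_hfun : ∑' n, hfun n = 1/2 := by
  rw [Summable.tsum_eq_zero_add summable_hfun]
  have h1 : hfun 0 = 0 := by simp [hfun]
  have h2 : ∀ n : ℕ, hfun (n+1) = ((1:ℝ)/2)^n * (1/4) := by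
    intro n
    rw [hfun, if_neg (Nat.succ_ne_zero n)]
    ring
  rw [h1, zero_add]
  calc ∑' n : ℕ, hfun (n+1) = ∑' n : ℕ, ((1:ℝ)/2)^n * (1/4) := by
        exact tsum_congr h2
    _ = (∑' n : ℕ, ((1:ℝ)/2)^n) * (1/4) := tsum_mul_right
    _ = 1/2 := by rw [tsum_geometric_two]; norm_num

lemma geom_partial (N : ℕ) : ∑ i ∈ Finset.range N, ((1:ℝ)/2)^(i+1) = 1 - (1/2)^N := by
  induction N with
  | zero => simp
  | succ N ih => rw [Finset.sum_range_succ, ih, pow_succ]; ring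

lemma ga_lt (hk : 3 ≤ k) {a : ℝ} (ha : 0 ≤ a) (ha' : a < 1/(k:ℝ)) : gk k a < 1/2 := by
  have hk0 : 0 < k := by omega
  have hkr : (3:ℝ) ≤ k := by exact_mod_cast hk
  have ha1 : a ≠ 1 := by
    intro h
    rw [h] at ha'
    have : (1:ℝ)/k < 1 := by rw [div_lt_one (by linarith)]; linarith
    linarith
  have hd0 : digit k 0 a = 0 := digit_zero_a hk ha ha'
  rw [gk, if_neg ha1]
  by_cases hP : ∀ n, digit k n a = 0 ∨ digit k n a = (k:ℤ) - 1
  · rw [if_pos hP]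
    obtain ⟨n₀, hn₀, hdn₀⟩ : ∃ n₀, 1 ≤ n₀ ∧ digit k n₀ a = 0 := by
      have h := not_all_km1 hk ha ha'
      push_neg at h
      obtain ⟨n₀, h1, h2⟩ := h
      exact ⟨n₀, h1, (hP n₀).resolve_right h2⟩
    have hle : ∀ n, (digit k n a : ℝ) / (((k:ℝ)-1) * 2^(n+1)) ≤ hfun n := by
      intro n
      rw [hfun]
      split
      · rename_i h; rw [h, hd0]; simp
      · exact term_le hk a n
    have hlt : (digit k n₀ a : ℝ) / (((k:ℝ)-1) * 2^(n₀+1)) < hfun n₀ := by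
      rw [hfun, if_neg (by omega : n₀ ≠ 0), hdn₀]
      simp only [Int.cast_zero, zero_div]
      positivity
    calc ∑' n, (digit k n a : ℝ) / (((k:ℝ)-1) * 2^(n+1)) < ∑' n, hfun n :=
          Summable.tsum_lt_tsum hle hlt (summable_term hk a) summable_hfun
      _ = 1/2 := tsum_hfun
  · rw [if_neg hP]
    set S := {n : ℕ | ¬(digit k n a = 0 ∨ digit k n a = (k:ℤ) - 1)} with hS
    have hSne : S.Nonempty := by
      push_neg at hP
      obtain ⟨n, hn⟩ := hP
      exact ⟨n, by simp [hS]; tauto⟩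
    have hNmem : sInf S ∈ S := Nat.sInf_mem hSne
    have h0S : 0 ∉ S := by
      simp only [hS, Set.mem_setOf_eq, not_not]
      exact Or.inl hd0
    have hN1 : 1 ≤ sInf S := by
      rcases Nat.eq_zero_or_pos (sInf S) with h | h
      · rw [h] at hNmem; exact absurd hNmem h0S
      · exact h
    obtain ⟨N', hN'⟩ : ∃ N', sInf S = N' + 1 := ⟨sInf S - 1, by omega⟩
    rw [hN']
    have hsum : ∑ n ∈ Finset.range (N'+1), (digit k n a : ℝ) / (((k:ℝ)-1) * 2^(n+1))
        ≤ 1/2 - (1/2)^(N'+1) := by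
      rw [Finset.sum_range_succ']
      have h1 : (digit k 0 a : ℝ) / (((k:ℝ)-1) * 2^(0+1)) = 0 := by rw [hd0]; simp
      rw [h1, add_zero]
      calc ∑ i ∈ Finset.range N', (digit k (i+1) a : ℝ) / (((k:ℝ)-1) * 2^(i+1+1))
          ≤ ∑ i ∈ Finset.range N', ((1:ℝ)/2)^(i+2) := by
            apply Finset.sum_le_sum
            intro i _
            exact term_le hk a (i+1)
        _ = (∑ i ∈ Finset.range N', ((1:ℝ)/2)^(i+1)) * (1/2) := by
            rw [Finset.sum_mul]
            apply Finset.sum_congr rfl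
            intro i _
            rw [pow_succ]
        _ = (1 - (1/2)^N') * (1/2) := by rw [geom_partial]
        _ = 1/2 - (1/2)^(N'+1) := by rw [pow_succ]; ring
    have hhalf : (1:ℝ)/2^(N'+1+1) = (1/2)^(N'+1) * (1/2) := by
      rw [div_pow, one_pow]; ring
    have hp : (0:ℝ) < (1/2)^(N'+1) := by positivity
    rw [hhalf]
    linarith [hsum, hp]

lemma gb_gt (hk : 3 ≤ k) {b : ℝ} (hb' : ((k:ℝ)-1)/k < b) (hb : b ≤ 1) : 1/2 < gk k b := by
  have hk0 : 0 < k := by omega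
  have hkr : (3:ℝ) ≤ k := by exact_mod_cast hk
  have hkm1 : ((k:ℝ)-1) ≠ 0 := by linarith
  rcases lt_or_eq_of_le hb with hb1 | hb1
  swap
  · rw [gk, if_pos hb1]; norm_num
  have hd0 : digit k 0 b = (k:ℤ)-1 := digit_zero_b hk hb' hb1
  have hf0 : (digit k 0 b : ℝ) / (((k:ℝ)-1) * 2^(0+1)) = 1/2 := by
    rw [hd0]
    push_cast
    rw [pow_one]
    field_simp
  rw [gk, if_neg (ne_of_lt hb1)]
  by_cases hP : ∀ n, digit k n b = 0 ∨ digit k n b = (k:ℤ) - 1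
  · rw [if_pos hP]
    obtain ⟨n₀, hn₀, hdn₀⟩ : ∃ n₀, 1 ≤ n₀ ∧ digit k n₀ b = (k:ℤ)-1 := by
      have h := not_all_zero hk hb' hb1
      push_neg at h
      obtain ⟨n₀, h1, h2⟩ := h
      exact ⟨n₀, h1, (hP n₀).resolve_left h2⟩
    have hsum := Summable.sum_le_tsum ({0, n₀} : Finset ℕ)
      (fun i _ => term_nonneg hk b i) (summable_term hk b)
    rw [Finset.sum_pair (by omega : (0:ℕ) ≠ n₀)] at hsum
    have hfn₀ : (digit k n₀ b : ℝ) / (((k:ℝ)-1) * 2^(n₀+1)) > 0 := by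
      rw [hdn₀]
      apply div_pos ?_ (denom_pos hk n₀)
      push_cast
      linarith
    rw [hf0] at hsum
    linarith
  · rw [if_neg hP]
    set S := {n : ℕ | ¬(digit k n b = 0 ∨ digit k n b = (k:ℤ) - 1)} with hS
    have hSne : S.Nonempty := by
      push_neg at hP
      obtain ⟨n, hn⟩ := hP
      exact ⟨n, by simp [hS]; tauto⟩
    have hNmem : sInf S ∈ S := Nat.sInf_mem hSne
    have h0S : 0 ∉ S := by
      simp only [hS, Set.mem_setOf_eq, not_not]
      exact Or.inr hd0
    have hN1 : 1 ≤ sInf S := by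
      rcases Nat.eq_zero_or_pos (sInf S) with h | h
      · rw [h] at hNmem; exact absurd hNmem h0S
      · exact h
    have hsum : 1/2 ≤ ∑ n ∈ Finset.range (sInf S), (digit k n b : ℝ) / (((k:ℝ)-1) * 2^(n+1)) := by
      rw [← hf0]
      apply Finset.single_le_sum (fun i _ => term_nonneg hk b i)
      exact Finset.mem_range.mpr (by omega)
    have hp : (0:ℝ) < 1/2^(sInf S + 1) := by positivity
    linarith

lemma g_form (hk : 3 ≤ k) {x : ℝ} (hx0 : 0 < x) (hx1 : x < 1) (l m : ℕ)
    (hxe : x = (l:ℝ)/(k:ℝ)^m) :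
    ∃ N j : ℕ, gk k x = (2*(j:ℝ)+1)/2^(N+1) ∧ j + 1 ≤ 2^N := by
  have hk0 : 0 < k := by omega
  have hkr : (3:ℝ) ≤ k := by exact_mod_cast hk
  have hkm1 : ((k:ℝ)-1) ≠ 0 := by linarith
  suffices h : ∃ N : ℕ, (∀ n < N, digit k n x = 0 ∨ digit k n x = (k:ℤ)-1) ∧
      gk k x = (∑ n ∈ Finset.range N, (digit k n x : ℝ) / (((k:ℝ)-1) * 2^(n+1)))
        + 1/2^(N+1) by
    obtain ⟨N, hgood, hval⟩ := h
    set j : ℕ := ∑ n ∈ Finset.range N, (if digit k n x = (k:ℤ)-1 then 2^(N-1-n) else 0)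
      with hj
    refine ⟨N, j, ?_, ?_⟩
    · rw [hval]
      have hsum : (∑ n ∈ Finset.range N, (digit k n x : ℝ) / (((k:ℝ)-1) * 2^(n+1)))
          = (j:ℝ)/2^N := by
        rw [hj]
        push_cast
        rw [Finset.sum_div]
        apply Finset.sum_congr rfl
        intro n hn
        rcases hgood n (Finset.mem_range.mp hn) with h0 | h1
        · rw [h0, if_neg (by omega : ¬(0:ℤ) = (k:ℤ)-1)]
          simp
        · rw [h1, if_pos rfl]
          push_cast
          have h2 : (2:ℝ)^N = 2^(N-1-n) * 2^(n+1) := by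
            rw [← pow_add]
            congr 1
            have := Finset.mem_range.mp hn
            omega
          rw [h2]
          field_simp
      rw [hsum]
      field_simp
      ring
    · have hb1 : j ≤ ∑ n ∈ Finset.range N, 2^(N-1-n) := by
        rw [hj]
        apply Finset.sum_le_sum
        intro n _
        split <;> simp
      have hb2 : ∑ n ∈ Finset.range N, 2^(N-1-n) = 2^N - 1 := by
        rw [Finset.sum_range_reflect (fun i => 2^i) N, sum_two_pow]
      have : 1 ≤ 2^N := Nat.one_le_two_pow
      omega
  by_cases hP : ∀ n, digit k n x = 0 ∨ digit k n x = (k:ℤ)-1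
  · obtain ⟨n1, hn1m, hn1⟩ := exists_pos_digit hk0 hx0 hx1 l m hxe
    set F := (Finset.range m).filter (fun n => digit k n x ≠ 0) with hF
    have hFne : F.Nonempty := ⟨n1, by simp [hF, hn1m, hn1]⟩
    set N := F.max' hFne with hNdef
    have hNF : N ∈ F := F.max'_mem hFne
    have hNm : N < m := by
      have := (Finset.mem_filter.mp hNF).1
      exact Finset.mem_range.mp this
    have hNne : digit k N x ≠ 0 := by
      have := (Finset.mem_filter.mp hNF).2
      simpa using this
    have hbig : ∀ n, N < n → digit k n x = 0 := by
      intro n hn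
      by_cases hnm : n < m
      · by_contra hne
        have hmem : n ∈ F := Finset.mem_filter.mpr ⟨Finset.mem_range.mpr hnm, by simpa using hne⟩
        have := F.le_max' n hmem
        omega
      · rw [hxe]
        exact digit_terminating hk0 l m n (by omega)
    refine ⟨N, fun n _ => hP n, ?_⟩
    rw [gk, if_neg (ne_of_lt hx1), if_pos hP]
    have htsum : ∑' n, (digit k n x : ℝ) / (((k:ℝ)-1) * 2^(n+1))
        = ∑ n ∈ Finset.range (N+1), (digit k n x : ℝ) / (((k:ℝ)-1) * 2^(n+1)) := by
      apply tsum_eq_sum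
      intro n hn
      have hn' : N < n := by
        simp only [Finset.mem_range] at hn
        omega
      rw [hbig n hn']
      simp
    rw [htsum, Finset.sum_range_succ]
    congr 1
    have hdN : digit k N x = (k:ℤ)-1 := (hP N).resolve_left hNne
    rw [hdN]
    push_cast
    rw [mul_comm, ← div_div, div_right_comm, div_self hkm1]
  · refine ⟨sInf {n | ¬(digit k n x = 0 ∨ digit k n x = (k:ℤ)-1)}, ?_, ?_⟩
    · intro n hn
      by_contra hbad
      have := Nat.sInf_le (s := {n | ¬(digit k n x = 0 ∨ digit k n x = (k:ℤ)-1)}) hbad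
      omega
    · rw [gk, if_neg (ne_of_lt hx1), if_neg hP]

lemma tmap2_iter (x : ℝ) (h0 : 0 ≤ x) (h1 : x < 1) (n : ℕ) :
    (Tmap 2)^[n] x = Int.fract ((2:ℝ)^n * x) := by
  induction n with
  | zero => simp [Int.fract_eq_self.mpr ⟨h0, h1⟩]
  | succ n ih =>
      rw [Function.iterate_succ_apply', ih, Tmap]
      have hrw : ((2:ℕ):ℝ) * Int.fract ((2:ℝ)^n * x)
          = (2:ℝ)^(n+1) * x - ((2 * ⌊(2:ℝ)^n * x⌋ : ℤ) : ℝ) := by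
        rw [Int.fract]
        push_cast
        ring
      rw [hrw, Int.fract_sub_intCast]

end Aux

/-- for `x = ℓ/k^m ∈ (0,1)`, the point `g_k(x)` is not in the
survivor set `W_2(g_k(a), g_k(b))`. -/
theorem stmt15 (k : ℕ) (hk : 3 ≤ k) (a b : ℝ) (ha : 0 ≤ a) (ha' : a < 1 / (k : ℝ))
    (hb' : ((k : ℝ) - 1) / k < b) (hb : b ≤ 1)
    (x : ℝ) (hx : x ∈ Set.Ioo (0 : ℝ) 1) (l m : ℕ) (hxe : x = (l : ℝ) / (k : ℝ) ^ m) :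
    gk k x ∉ W 2 (gk k a) (gk k b) ∧
      ∃ n : ℕ, (Tmap 2)^[n] (gk k x) ∈ Set.Ioo (gk k a) (gk k b) := by
  obtain ⟨hx0, hx1⟩ := hx
  obtain ⟨N, j, hval, hjb⟩ := g_form hk hx0 hx1 l m hxe
  have hga := ga_lt hk ha ha'
  have hgb := gb_gt hk hb' hb
  have hg0 : 0 ≤ gk k x := by rw [hval]; positivity
  have hg1 : gk k x < 1 := by
    rw [hval, div_lt_one (by positivity)]
    have hj : (j:ℝ) + 1 ≤ 2^N := by exact_mod_cast hjb
    have h2 : (2:ℝ)^(N+1) = 2^N * 2 := pow_succ 2 N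
    linarith
  have hiter : (Tmap 2)^[N] (gk k x) = 1/2 := by
    rw [tmap2_iter _ hg0 hg1 N, hval]
    have h1 : (2:ℝ)^N * ((2*(j:ℝ)+1)/2^(N+1)) = ((j:ℤ):ℝ) + 1/2 := by
      rw [pow_succ]
      push_cast
      field_simp
    rw [h1, add_comm, Int.fract_add_intCast, Int.fract_eq_self.mpr ⟨by norm_num, by norm_num⟩]
  have hmem : (Tmap 2)^[N] (gk k x) ∈ Set.Ioo (gk k a) (gk k b) := by
    rw [hiter]
    exact ⟨hga, hgb⟩
  exact ⟨fun hW => hW.2 N hmem, N, hmem⟩
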